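/- Let G be a finite acyclic directed graph with upward planar order ≺, and let v be a processive vertex. If e₁ ≺ e ≺ e₂ with t(e₁) = s(e₂) = v, then either e₁ ≺ e ⪯ I(v)⁺ or O(v)⁻ ⪯ e ≺ e₂; i.e., the interval [e₁, e₂] is the disjoint union [e₁, I(v)⁺] ⊔ [O(v)⁻, e₂]. -/
import Mathlib


structure Digraph' (V E : Type) where
  s : E → V
  t : E → V

def conv {E : Type} [LinearOrder E] (X : Set E) : Set E :=
  {y | ∃ a ∈ X, ∃ b ∈ X, a ≤ y ∧ y ≤ b}

namespace Digraph'

variable {V E : Type} (G : Digraph' V E)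

/-- One edge can be followed by another. -/
def step (e f : E) : Prop := G.t e = G.s f

/-- The reachable order: a directed path starts with `e₁` and ends with `e₂`
(including the case `e₁ = e₂`). -/
def reach : E → E → Prop := Relation.ReflTransGen G.step

/-- No directed cycles. -/
def Acyclic : Prop := ∀ e, ¬ Relation.TransGen G.step e e

/-- Incoming edges of a vertex. -/
def I (v : V) : Set E := {e | G.t e = v}

/-- Outgoing edges of a vertex. -/
def O (v : V) : Set E := {e | G.s e = v}

/-- All edges incident to a vertex `v` (incoming or outgoing). -/
def Ev (v : V) : Set E := G.I v ∪ G.O v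

variable [LinearOrder E]

/-- (U₁): reachability implies order. -/
def U1 : Prop := ∀ e₁ e₂ : E, G.reach e₁ e₂ → e₁ ≤ e₂

/-- (U₂): for every vertex, the hulls of incoming and outgoing edges are disjoint and
together give the hull of all incident edges. -/
def U2 : Prop := ∀ v : V,
  conv (G.I v) ∩ conv (G.O v) = ∅ ∧ conv (G.Ev v) = conv (G.I v) ∪ conv (G.O v)

/-- (U₃). -/
def U3 : Prop := ∀ v₁ v₂ : V,
  ((G.I v₁ ∩ conv (G.I v₂)).Nonempty → conv (G.I v₁) ⊆ conv (G.I v₂)) ∧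
  ((G.O v₁ ∩ conv (G.O v₂)).Nonempty → conv (G.O v₁) ⊆ conv (G.O v₂))

/-- (Q₂), the nesting condition. -/
def Q2 : Prop := ∀ e₁ e e₂ : E, e₁ < e → e < e₂ →
  (G.t e₁ = G.t e₂ → G.I (G.t e) ⊆ conv (G.I (G.t e₁))) ∧
  (G.s e₁ = G.s e₂ → G.O (G.s e) ⊆ conv (G.O (G.s e₁))) ∧
  (G.t e₁ = G.s e₂ →
    G.I (G.t e) ⊆ conv (G.I (G.t e₁)) ∨ G.O (G.s e) ⊆ conv (G.O (G.s e₂)))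

end Digraph'

open Digraph' in
/-- For an upward planar order and a processive vertex `v`, if `e₁ ≺ e ≺ e₂` with
`t(e₁) = s(e₂) = v`, then either `e ⪯ I(v)⁺` or `O(v)⁻ ⪯ e`. -/
theorem interval_split_at_processive {V E : Type} [Fintype V] [Fintype E] [LinearOrder E]
    (G : Digraph' V E) (hG : G.Acyclic) (hU1 : G.U1) (hU2 : G.U2)
    (v : V) (hI : (G.I v).Nonempty) (hO : (G.O v).Nonempty)
    (e₁ e e₂ : E) (h₁ : e₁ < e) (h₂ : e < e₂)
    (ht : G.t e₁ = v) (hs : G.s e₂ = v) :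
    (∃ i ∈ G.I v, e ≤ i) ∨ (∃ o ∈ G.O v, o ≤ e) := by
  have hmem : e ∈ conv (G.Ev v) :=
    ⟨e₁, Or.inl ht, e₂, Or.inr hs, le_of_lt h₁, le_of_lt h₂⟩
  rw [(hU2 v).2] at hmem
  rcases hmem with ⟨a, ha, b, hb, hab, hbb⟩ | ⟨a, ha, b, hb, hab, hbb⟩
  · exact Or.inl ⟨b, hb, hbb⟩
  · exact Or.inr ⟨a, ha, hab⟩
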